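/- Let G be a directed graph decomposed as a 3-clique-sum G = G₁ ⊕_c G₂ at clique c = {v₁, v₂, v₃}, with s, t ∈ V(G₁) \ c. Let L' be a directed graph on terminal set c (disjoint from G₁ otherwise) having the same parity configuration as G₂ with respect to c. Then G has a simple s→t path of parity p if and only if G₁ ⊕_c L' has a simple s→t path of parity p. -/

import Mathlib

/-- `l` is a simple directed path along the edge relation `E` from `a` to `b`. -/
def IsDipathFrom {V : Type*} (E : V → V → Prop) (l : List V) (a b : V) : Prop :=
  l.Nodup ∧ l.Chain' E ∧ l.head? = some a ∧ l.getLast? = some b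

/-- The length (number of edges) of a path given as its list of vertices. -/
def pathLen {V : Type*} (l : List V) : ℕ := l.length - 1

/-- `p ∈ Dir(a, b)` (w.r.t. the third terminal `c`): there is a simple directed path of
parity `p` from `a` to `b` avoiding `c`. -/
def HasDir {V : Type*} (E : V → V → Prop) (a b c : V) (p : ℕ) : Prop :=
  ∃ l : List V, IsDipathFrom E l a b ∧ c ∉ l ∧ pathLen l % 2 = p

/-- `p ∈ Via(a, m, b)`: there is a simple path of parity `p` from `a` to `b` through `m`,
and no simple path of parity `p` from `a` to `b` avoids `m`. -/
def HasVia {V : Type*} (E : V → V → Prop) (a m b : V) (p : ℕ) : Prop :=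
  (∃ l : List V, IsDipathFrom E l a b ∧ m ∈ l ∧ pathLen l % 2 = p) ∧ ¬ HasDir E a b m p

/-- `(x, y)` is a bad pair between `Dir(v i, v j)` and `Dir(v j, v k)`. -/
def BadPair {V : Type*} (E : V → V → Prop) (v : Fin 3 → V) (i j k : Fin 3) (x y : ℕ) : Prop :=
  HasDir E (v i) (v j) (v k) x ∧ HasDir E (v j) (v k) (v i) y ∧
    ¬ (HasDir E (v i) (v k) (v j) ((x + y) % 2) ∨ HasVia E (v i) (v j) (v k) ((x + y) % 2))

open List in
lemma getD_eq_get' {V : Type*} (l : List V) (d : V) {i : ℕ} (h : i < l.length) :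
    l.getD i d = l.get ⟨i, h⟩ := List.getD_eq_get l d ⟨i, h⟩

lemma chain'_iff_getD {V : Type*} (E : V → V → Prop) (l : List V) (d : V) :
    l.Chain' E ↔ ∀ i, i + 1 < l.length → E (l.getD i d) (l.getD (i+1) d) := by
  simp only [List.Chain']
  rw [List.isChain_iff_getElem]
  constructor
  · intro h i hi
    have := h i hi
    rwa [List.getD_eq_getElem l d (by omega), List.getD_eq_getElem l d hi]
  · intro h i hi
    have := h i hi
    rwa [List.getD_eq_getElem l d (by omega), List.getD_eq_getElem l d hi] at this

lemma nodup_getD_inj {V : Type*} {l : List V} (h : l.Nodup) (d : V) {i j : ℕ}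
    (hi : i < l.length) (hj : j < l.length) (hij : l.getD i d = l.getD j d) : i = j := by
  rw [List.nodup_iff_injective_get] at h
  rw [getD_eq_get' l d hi, getD_eq_get' l d hj] at hij
  exact Fin.mk.injEq i hi j hj ▸ congrArg Fin.val (h hij)

lemma mem_iff_getD {V : Type*} (l : List V) (d : V) (x : V) :
    x ∈ l ↔ ∃ i, i < l.length ∧ l.getD i d = x := by
  rw [List.mem_iff_get]
  constructor
  · rintro ⟨⟨i, hi⟩, rfl⟩; exact ⟨i, hi, getD_eq_get' l d hi⟩
  · rintro ⟨i, hi, h⟩; exact ⟨⟨i, hi⟩, by rw [← getD_eq_get' l d hi, h]⟩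

lemma getD_take' {V : Type*} (l : List V) (d : V) {i m : ℕ} (h : i < m) :
    (l.take m).getD i d = l.getD i d := by
  by_cases hi : i < l.length
  · rw [getD_eq_get' l d hi, getD_eq_get' _ d (by simp [List.length_take]; omega)]
    simp [List.getElem_take]
  · rw [List.getD_eq_default _ _ (by simp [List.length_take]; omega),
      List.getD_eq_default _ _ (by omega)]

lemma getD_drop' {V : Type*} (l : List V) (d : V) (m i : ℕ) :
    (l.drop m).getD i d = l.getD (m + i) d := by
  by_cases hi : m + i < l.length
  · rw [getD_eq_get' l d hi, getD_eq_get' _ d (by simp [List.length_drop]; omega)]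
    simp [List.getElem_drop]
  · rw [List.getD_eq_default _ _ (by simp [List.length_drop]; omega),
      List.getD_eq_default _ _ (by omega)]

lemma head?_getD {V : Type*} {l : List V} (h : l ≠ []) (d : V) :
    l.head? = some (l.getD 0 d) := by
  cases l with
  | nil => simp at h
  | cons a l => simp

lemma getLast?_getD {V : Type*} {l : List V} (h : l ≠ []) (d : V) :
    l.getLast? = some (l.getD (l.length - 1) d) := by
  rw [List.getLast?_eq_getLast h, List.getLast_eq_getElem h,
    List.getD_eq_getElem l d (by have := List.length_pos_iff.2 h; omega)]

lemma third_index : ∀ a b : Fin 3, a ≠ b → ∃ c : Fin 3, c ≠ a ∧ c ≠ b ∧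
    ∀ k : Fin 3, k = a ∨ k = b ∨ k = c := by decide

lemma mem_S_of_chain {V : Type*} {E : V → V → Prop} {S : Set V}
    (hE : ∀ u w, E u w → u ∈ S ∧ w ∈ S) {m : List V} (hc : m.Chain' E)
    (hlen : 2 ≤ m.length) (d : V) : ∀ x ∈ m, x ∈ S := by
  intro x hx
  rw [mem_iff_getD m d] at hx
  obtain ⟨i, hi, rfl⟩ := hx
  rw [chain'_iff_getD E m d] at hc
  by_cases h : i + 1 < m.length
  · exact (hE _ _ (hc i h)).1
  · have hi1 : i - 1 + 1 < m.length := by omega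
    have := (hE _ _ (hc (i-1) hi1)).2
    have : i - 1 + 1 = i := by omega
    simpa [this] using (hE _ _ (hc (i-1) hi1)).2

lemma transfer_dir {V : Type*} (E₁ E₂ E' : V → V → Prop) (S₁ S₂ S' : Set V)
    (v : Fin 3 → V) (hv : Function.Injective v) (s t : V)
    (hS₁₂ : S₁ ∩ S₂ = {v 0, v 1, v 2}) (hS₁' : S₁ ∩ S' = {v 0, v 1, v 2})
    (hE₁ : ∀ u w, E₁ u w → u ∈ S₁ ∧ w ∈ S₁)
    (hE₂ : ∀ u w, E₂ u w → u ∈ S₂ ∧ w ∈ S₂)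
    (hE' : ∀ u w, E' u w → u ∈ S' ∧ w ∈ S')
    (hs : s ∈ S₁ ∧ s ∉ ({v 0, v 1, v 2} : Set V))
    (ht : t ∈ S₁ ∧ t ∉ ({v 0, v 1, v 2} : Set V))
    (hconfig : ∀ i j k : Fin 3, i ≠ j → j ≠ k → i ≠ k → ∀ q : ℕ,
      (HasDir E₂ (v i) (v j) (v k) q → HasDir E' (v i) (v j) (v k) q) ∧
      (HasVia E₂ (v i) (v k) (v j) q → HasVia E' (v i) (v k) (v j) q))
    (l : List V) (hl : IsDipathFrom (fun a b => E₁ a b ∨ E₂ a b) l s t) :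
    ∃ l' : List V, IsDipathFrom (fun a b => E₁ a b ∨ E' a b) l' s t ∧
      pathLen l' % 2 = pathLen l % 2 := by
  classical
  obtain ⟨hnd, hch, hhd, hlast⟩ := hl
  set n := l.length with hn
  set f : ℕ → V := fun i => l.getD i s with hfdef
  have hne : l ≠ [] := by intro h; rw [h] at hhd; simp at hhd
  have hn1 : 1 ≤ n := List.length_pos_iff.2 hne
  have hf0 : f 0 = s := by
    have := head?_getD hne s; rw [hhd] at this; exact (Option.some_inj.1 this).symm
  have hfl : f (n - 1) = t := by
    have := getLast?_getD hne s; rw [hlast] at this; exact (Option.some_inj.1 this).symm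
  have hchain : ∀ i, i + 1 < n → E₁ (f i) (f (i+1)) ∨ E₂ (f i) (f (i+1)) :=
    (chain'_iff_getD _ l s).1 hch
  have hinj : ∀ i j, i < n → j < n → f i = f j → i = j :=
    fun i j hi hj h => nodup_getD_inj hnd s hi hj h
  -- membership of clique
  have hclique : ∀ x, x ∈ S₁ → x ∈ S₂ → ∃ a : Fin 3, x = v a := by
    intro x h1 h2
    have : x ∈ S₁ ∩ S₂ := ⟨h1, h2⟩
    rw [hS₁₂] at this
    rcases this with h | h | h
    exacts [⟨0, h⟩, ⟨1, h⟩, ⟨2, h⟩]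
  have hnotcl : ∀ x, x ∉ ({v 0, v 1, v 2} : Set V) → ∀ a : Fin 3, x ≠ v a := by
    intro x hx a hxa
    apply hx
    fin_cases a
    · exact Or.inl hxa
    · exact Or.inr (Or.inl hxa)
    · exact Or.inr (Or.inr hxa)
  set Bad : ℕ → Prop := fun i => i + 1 < n ∧ ¬ E₁ (f i) (f (i+1)) with hBad
  have hgood : ∀ k, k + 1 < n → ¬ Bad k → E₁ (f k) (f (k+1)) := by
    intro k h1 h2
    by_contra h3; exact h2 ⟨h1, h3⟩
  have hE2edge : ∀ k, Bad k → E₂ (f k) (f (k+1)) :=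
    fun k hk => (hchain k hk.1).resolve_left hk.2
  by_cases hB : ∃ i, Bad i
  case neg =>
    refine ⟨l, ⟨hnd, ?_, hhd, hlast⟩, rfl⟩
    rw [chain'_iff_getD _ l s]
    intro i hi
    exact Or.inl (hgood i hi (fun h => hB ⟨i, h⟩))
  case pos =>
  set i₀ := Nat.find hB with hi₀def
  set i₁ := Nat.findGreatest Bad (n - 2) with hi₁def
  have hbad₀ : Bad i₀ := Nat.find_spec hB
  have hmin : ∀ k, k < i₀ → ¬ Bad k := fun k hk => Nat.find_min hB hk
  have hbad₁ : Bad i₁ := by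
    obtain ⟨j, hj⟩ := hB
    exact Nat.findGreatest_spec (m := j) (by omega) hj
  have hle₀₁ : i₀ ≤ i₁ := Nat.le_findGreatest (by have := hbad₀.1; omega) hbad₀
  have hmax : ∀ k, i₁ < k → k + 1 < n → ¬ Bad k := by
    intro k h1 h2
    exact Nat.findGreatest_is_greatest h1 (by omega)
  -- endpoints of the excursion are clique vertices
  have hi₀S₂ : f i₀ ∈ S₂ := (hE₂ _ _ (hE2edge i₀ hbad₀)).1
  have hi₀S₁ : f i₀ ∈ S₁ := by
    rcases Nat.eq_zero_or_pos i₀ with h | h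
    · rw [h, hf0]; exact hs.1
    · have h1 : (i₀ - 1) + 1 < n := by have := hbad₀.1; omega
      have := (hE₁ _ _ (hgood (i₀ - 1) h1 (hmin _ (by omega)))).2
      have h2 : i₀ - 1 + 1 = i₀ := by omega
      rwa [h2] at this
  obtain ⟨a', ha'⟩ := hclique _ hi₀S₁ hi₀S₂
  have hi₀pos : 1 ≤ i₀ := by
    by_contra h
    have h0 : i₀ = 0 := by omega
    exact hnotcl s hs.2 a' (by rw [← hf0, ← h0]; exact ha')
  have hi₁S₂ : f (i₁ + 1) ∈ S₂ := (hE₂ _ _ (hE2edge i₁ hbad₁)).2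
  have hi₁S₁ : f (i₁ + 1) ∈ S₁ := by
    by_cases h : i₁ + 2 < n
    · exact (hE₁ _ _ (hgood (i₁ + 1) h (hmax _ (by omega) h))).1
    · have : i₁ + 1 = n - 1 := by have := hbad₁.1; omega
      rw [this, hfl]; exact ht.1
  obtain ⟨b', hb'⟩ := hclique _ hi₁S₁ hi₁S₂
  have hi₁lt : i₁ + 2 < n := by
    rcases Nat.lt_or_ge (i₁ + 2) n with h | h
    · exact h
    · exfalso
      have : i₁ + 1 = n - 1 := by have := hbad₁.1; omega
      exact hnotcl t ht.2 b' (by rw [← hfl, ← this]; exact hb')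
  have hab : a' ≠ b' := by
    intro h
    have : f i₀ = f (i₁ + 1) := by rw [ha', hb', h]
    have := hinj _ _ (by omega) (by omega) this
    omega
  -- contiguity of bad edges
  have hcontig : ∀ j, i₀ ≤ j → j ≤ i₁ → Bad j := by
    by_contra hcon
    push_neg at hcon
    obtain ⟨j, hj₀, hj₁, hjB⟩ := hcon
    have hj₀' : i₀ < j := lt_of_le_of_ne hj₀ (fun h => hjB (h ▸ hbad₀))
    have hj₁' : j < i₁ := lt_of_le_of_ne hj₁ (fun h => hjB (h ▸ hbad₁))
    have hjn : j + 1 < n := by omega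
    have hjE : E₁ (f j) (f (j+1)) := hgood j hjn hjB
    set Good : ℕ → Prop := fun k => i₀ < k ∧ k + 1 < n ∧ E₁ (f k) (f (k+1)) with hGood
    have hGex : ∃ k, Good k := ⟨j, hj₀', hjn, hjE⟩
    set b := Nat.find hGex with hbdef
    have hbG : Good b := Nat.find_spec hGex
    have hbj : b ≤ j := Nat.find_min' hGex ⟨hj₀', hjn, hjE⟩
    have hb_lt : b < i₁ := by
      rcases lt_or_eq_of_le (le_trans hbj (le_of_lt hj₁')) with h | h
      · exact h
      · exfalso
        have := hbG.2.2
        rw [h] at this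
        exact hbad₁.2 this
    have hrun1 : ∀ k, i₀ ≤ k → k < b → Bad k := by
      intro k h1 h2
      rcases lt_or_eq_of_le h1 with h | h
      · exact ⟨by omega, fun hEk => (Nat.find_min hGex h2) ⟨h, by omega, hEk⟩⟩
      · exact h ▸ hbad₀
    set e := Nat.findGreatest Good (i₁ - 1) with hedef
    have heG : Good e := Nat.findGreatest_spec (m := b) (by omega) hbG
    have hbe : b ≤ e := Nat.le_findGreatest (by omega) hbG
    have he_le : e ≤ i₁ - 1 := Nat.findGreatest_le _
    have hrun2 : ∀ k, e < k → k ≤ i₁ → Bad k := by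
      intro k h1 h2
      rcases lt_or_eq_of_le h2 with h | h
      · exact ⟨by omega, fun hEk =>
          (Nat.findGreatest_is_greatest (n := i₁ - 1) (P := Good) h1 (by omega))
            ⟨by omega, by omega, hEk⟩⟩
      · exact h ▸ hbad₁
    -- four distinct clique vertices
    have hx2S₁ : f b ∈ S₁ := (hE₁ _ _ hbG.2.2).1
    have hx2S₂ : f b ∈ S₂ := by
      have hb1 : Bad (b - 1) := hrun1 (b-1) (by omega) (by omega)
      have := (hE₂ _ _ (hE2edge _ hb1)).2
      have h2 : b - 1 + 1 = b := by omega
      rwa [h2] at this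
    have hx3S₁ : f (e + 1) ∈ S₁ := (hE₁ _ _ heG.2.2).2
    have hx3S₂ : f (e + 1) ∈ S₂ := (hE₂ _ _ (hE2edge _ (hrun2 (e+1) (by omega) (by omega)))).1
    obtain ⟨a2, ha2⟩ := hclique _ hx2S₁ hx2S₂
    obtain ⟨a3, ha3⟩ := hclique _ hx3S₁ hx3S₂
    -- positions i₀ < b ≤ e < e+1 ≤ i₁ < i₁+1 all < n
    have hord : i₀ < b ∧ b < e + 1 ∧ e + 1 < i₁ + 1 ∧ i₁ + 1 < n := by
      refine ⟨hbG.1, by omega, by omega, by omega⟩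
    have d12 : a' ≠ a2 := fun h => by
      have : f i₀ = f b := by rw [ha', ha2, h]
      have := hinj _ _ (by omega) (by omega) this; omega
    have d13 : a' ≠ a3 := fun h => by
      have : f i₀ = f (e+1) := by rw [ha', ha3, h]
      have := hinj _ _ (by omega) (by omega) this; omega
    have d14 : a' ≠ b' := hab
    have d23 : a2 ≠ a3 := fun h => by
      have : f b = f (e+1) := by rw [ha2, ha3, h]
      have := hinj _ _ (by omega) (by omega) this; omega
    have d24 : a2 ≠ b' := fun h => by
      have : f b = f (i₁+1) := by rw [ha2, hb', h]
      have := hinj _ _ (by omega) (by omega) this; omega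
    have d34 : a3 ≠ b' := fun h => by
      have : f (e+1) = f (i₁+1) := by rw [ha3, hb', h]
      have := hinj _ _ (by omega) (by omega) this; omega
    have v1 := a'.isLt; have v2 := a2.isLt; have v3 := a3.isLt; have v4 := b'.isLt
    have e12 : a'.val ≠ a2.val := fun h => d12 (Fin.val_injective h)
    have e13 : a'.val ≠ a3.val := fun h => d13 (Fin.val_injective h)
    have e14 : a'.val ≠ b'.val := fun h => d14 (Fin.val_injective h)
    have e23 : a2.val ≠ a3.val := fun h => d23 (Fin.val_injective h)
    have e24 : a2.val ≠ b'.val := fun h => d24 (Fin.val_injective h)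
    have e34 : a3.val ≠ b'.val := fun h => d34 (Fin.val_injective h)
    omega
  -- the excursion
  obtain ⟨c', hc'a, hc'b, hcover⟩ := third_index a' b' hab
  set A := l.take i₀ with hA
  set B := l.drop (i₁ + 2) with hB2
  set M := (l.take (i₁ + 2)).drop i₀ with hM
  have hlenA : A.length = i₀ := by rw [hA, List.length_take]; omega
  have hlenB : B.length = n - (i₁ + 2) := by rw [hB2, List.length_drop]
  have hlenM : M.length = i₁ + 2 - i₀ := by
    rw [hM, List.length_drop, List.length_take]; omega
  have hMge2 : 2 ≤ M.length := by omega
  have hAget : ∀ k, k < i₀ → A.getD k s = f k := fun k hk => getD_take' l s hk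
  have hMget : ∀ k, k < i₁ + 2 - i₀ → M.getD k s = f (i₀ + k) := by
    intro k hk
    rw [hM, getD_drop' _ s, getD_take' l s (by omega)]
  have hBget : ∀ k, B.getD k s = f (i₁ + 2 + k) := fun k => getD_drop' l s _ _
  have hdecomp : A ++ (M ++ B) = l := by
    rw [hA, hM, hB2]
    rw [show l.take i₀ = (l.take (i₁+2)).take i₀ from by
      rw [List.take_take]; congr 1; omega]
    rw [← List.append_assoc, List.take_append_drop, List.take_append_drop]
  have hMne : M ≠ [] := by
    intro h; rw [h] at hMge2; simp at hMge2
  have hMnd : M.Nodup := hnd.sublist ((List.drop_sublist _ _).trans (List.take_sublist _ _))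
  have hMch : M.Chain' E₂ := by
    rw [chain'_iff_getD _ M s]
    intro k hk
    rw [hlenM] at hk
    rw [hMget k (by omega), hMget (k+1) (by omega)]
    have hb : Bad (i₀ + k) := hcontig _ (by omega) (by omega)
    have := hE2edge _ hb
    rwa [show i₀ + k + 1 = i₀ + (k+1) from by omega] at this
  have hMhd : M.head? = some (v a') := by
    rw [head?_getD hMne s, hMget 0 (by omega), show i₀ + 0 = i₀ from by omega, ha']
  have hMlast : M.getLast? = some (v b') := by
    rw [getLast?_getD hMne s, hlenM, hMget (i₁ + 2 - i₀ - 1) (by omega),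
      show i₀ + (i₁ + 2 - i₀ - 1) = i₁ + 1 from by omega, hb']
  have hMpath : IsDipathFrom E₂ M (v a') (v b') := ⟨hMnd, hMch, hMhd, hMlast⟩
  -- nodup pieces
  have hnd' := hnd
  rw [← hdecomp] at hnd'
  have hndA : A.Nodup := (List.nodup_append.1 hnd').1
  have hndMB := (List.nodup_append.1 hnd').2.1
  have hdisjA : A.Disjoint (M ++ B) := fun x hx hy => (List.nodup_append.1 hnd').2.2 x hx x hy rfl
  have hndB : B.Nodup := (List.nodup_append.1 hndMB).2.1
  have hdisjMB : M.Disjoint B := fun x hx hy => (List.nodup_append.1 hndMB).2.2 x hx x hy rfl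
  have hc'notM : (v c' ∈ A ∨ v c' ∈ B) → v c' ∉ M := by
    rintro (h | h) hm
    · exact hdisjA h (List.mem_append_left _ hm)
    · exact hdisjMB hm h
  -- transfer the excursion
  have hM' : ∃ M', IsDipathFrom E' M' (v a') (v b') ∧ pathLen M' % 2 = pathLen M % 2 ∧
      ((v c' ∈ A ∨ v c' ∈ B) → v c' ∉ M') := by
    by_cases hd : HasDir E₂ (v a') (v b') (v c') (pathLen M % 2)
    · obtain ⟨M', hM'p, hM'nm, hM'q⟩ :=
        (hconfig a' b' c' hab (Ne.symm hc'b) (Ne.symm hc'a) _).1 hd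
      exact ⟨M', hM'p, hM'q, fun _ => hM'nm⟩
    · have hc'M : v c' ∈ M := by
        by_contra h
        exact hd ⟨M, hMpath, h, rfl⟩
      have hvia : HasVia E₂ (v a') (v c') (v b') (pathLen M % 2) :=
        ⟨⟨M, hMpath, hc'M, rfl⟩, hd⟩
      obtain ⟨⟨M', hM'p, _, hM'q⟩, _⟩ :=
        (hconfig a' b' c' hab (Ne.symm hc'b) (Ne.symm hc'a) _).2 hvia
      exact ⟨M', hM'p, hM'q, fun h => absurd hc'M (hc'notM h)⟩
  obtain ⟨M', ⟨hM'nd, hM'ch, hM'hd, hM'last⟩, hM'q, hM'avoid⟩ := hM'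
  have hM'ne : M' ≠ [] := by intro h; rw [h] at hM'hd; simp at hM'hd
  have hM'0 : M'.getD 0 s = v a' := by
    have h := head?_getD hM'ne s; rw [hM'hd] at h; exact (Option.some_inj.1 h).symm
  have hM'l : M'.getD (M'.length - 1) s = v b' := by
    have h := getLast?_getD hM'ne s; rw [hM'last] at h; exact (Option.some_inj.1 h).symm
  have hM'ge2 : 2 ≤ M'.length := by
    by_contra h
    have h1 : M'.length = 1 := by
      have := List.length_pos_iff.2 hM'ne; omega
    have : v a' = v b' := by rw [← hM'0, ← hM'l, h1]
    exact hab (hv this)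
  have hM'S : ∀ x ∈ M', x ∈ S' := mem_S_of_chain hE' hM'ch hM'ge2 s
  -- S₁ memberships of A and B
  have hAS₁ : ∀ x ∈ A, x ∈ S₁ := by
    intro x hx
    rw [mem_iff_getD A s] at hx
    obtain ⟨j, hj, hjx⟩ := hx
    rw [hlenA] at hj
    rw [hAget j hj] at hjx
    have hjn : j + 1 < n := by have := hbad₀.1; omega
    rw [← hjx]
    exact (hE₁ _ _ (hgood j hjn (hmin j hj))).1
  have hBS₁ : ∀ x ∈ B, x ∈ S₁ := by
    intro x hx
    rw [mem_iff_getD B s] at hx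
    obtain ⟨j, hj, hjx⟩ := hx
    rw [hBget j] at hjx
    rw [hlenB] at hj
    rw [← hjx]
    by_cases h : i₁ + 2 + j + 1 < n
    · exact (hE₁ _ _ (hgood _ h (hmax _ (by omega) h))).1
    · rw [show i₁ + 2 + j = n - 1 from by omega, hfl]; exact ht.1
  have hmemA : ∀ x ∈ A, ∃ j, j < i₀ ∧ f j = x := by
    intro x hx; rw [mem_iff_getD A s] at hx
    obtain ⟨j, hj, hjx⟩ := hx; rw [hlenA] at hj
    exact ⟨j, hj, by rw [← hAget j hj]; exact hjx⟩
  have hmemB : ∀ x ∈ B, ∃ j, i₁ + 2 ≤ j ∧ j < n ∧ f j = x := by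
    intro x hx; rw [mem_iff_getD B s] at hx
    obtain ⟨j, hj, hjx⟩ := hx; rw [hlenB] at hj
    exact ⟨i₁ + 2 + j, by omega, by omega, by rw [← hBget j]; exact hjx⟩
  have havoidA : ∀ x ∈ A, x ≠ v a' ∧ x ≠ v b' := by
    intro x hx
    obtain ⟨j, hj, rfl⟩ := hmemA x hx
    constructor
    · rw [← ha']; intro h
      have := hinj _ _ (by have := hbad₀.1; omega) (by have := hbad₀.1; omega) h; omega
    · rw [← hb']; intro h
      have := hinj _ _ (by have := hbad₀.1; omega) (by omega) h; omega
  have havoidB : ∀ x ∈ B, x ≠ v a' ∧ x ≠ v b' := by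
    intro x hx
    obtain ⟨j, hj1, hj2, rfl⟩ := hmemB x hx
    constructor
    · rw [← ha']; intro h
      have := hinj _ _ hj2 (by omega) h; omega
    · rw [← hb']; intro h
      have := hinj _ _ hj2 (by omega) h; omega
  have hclique' : ∀ x, x ∈ S₁ → x ∈ S' → x = v a' ∨ x = v b' ∨ x = v c' := by
    intro x h1 h2
    have hx : x ∈ S₁ ∩ S' := ⟨h1, h2⟩
    rw [hS₁'] at hx
    have hx3 : ∃ k : Fin 3, x = v k := by
      rcases hx with h | h | h
      exacts [⟨0, h⟩, ⟨1, h⟩, ⟨2, h⟩]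
    obtain ⟨k, rfl⟩ := hx3
    rcases hcover k with h | h | h
    · exact Or.inl (by rw [h])
    · exact Or.inr (Or.inl (by rw [h]))
    · exact Or.inr (Or.inr (by rw [h]))
  have hdisjAM' : ∀ x ∈ A, x ∉ M' := by
    intro x hx hxM
    rcases hclique' x (hAS₁ x hx) (hM'S x hxM) with h | h | h
    · exact (havoidA x hx).1 h
    · exact (havoidA x hx).2 h
    · rw [h] at hx; exact hM'avoid (Or.inl hx) (h ▸ hxM)
  have hdisjM'B : ∀ x ∈ M', x ∉ B := by
    intro x hxM hx
    rcases hclique' x (hBS₁ x hx) (hM'S x hxM) with h | h | h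
    · exact (havoidB x hx).1 h
    · exact (havoidB x hx).2 h
    · rw [h] at hx; exact hM'avoid (Or.inr hx) (h ▸ hxM)
  have hAne : A ≠ [] := by
    intro h; rw [h] at hlenA; simp at hlenA; omega
  have hBne : B ≠ [] := by
    intro h; rw [h] at hlenB; simp at hlenB; omega
  refine ⟨A ++ (M' ++ B), ⟨?_, ?_, ?_, ?_⟩, ?_⟩
  · -- Nodup
    rw [List.nodup_append]
    refine ⟨hndA, ?_, ?_⟩
    · rw [List.nodup_append]
      exact ⟨hM'nd, hndB, fun x hx y hy hxy => hdisjM'B x hx (hxy ▸ hy)⟩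
    · intro x hx y hy hxy
      have hx' : x ∈ M' ++ B := hxy ▸ hy
      rcases List.mem_append.1 hx' with h | h
      · exact hdisjAM' x hx h
      · exact hdisjA hx (List.mem_append_right _ h)
  · -- Chain'
    simp only [List.Chain']
    rw [List.isChain_append]
    refine ⟨?_, ?_, ?_⟩
    · refine (chain'_iff_getD _ A s).2 ?_
      intro k hk
      rw [hlenA] at hk
      rw [hAget k (by omega), hAget (k+1) (by omega)]
      exact Or.inl (hgood k (by have := hbad₀.1; omega) (hmin k (by omega)))
    · rw [List.isChain_append]
      refine ⟨List.IsChain.imp (fun a b h => Or.inr h) hM'ch, ?_, ?_⟩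
      · refine (chain'_iff_getD _ B s).2 ?_
        intro k hk
        rw [hlenB] at hk
        rw [hBget k, hBget (k+1),
          show i₁ + 2 + (k+1) = (i₁ + 2 + k) + 1 from by omega]
        exact Or.inl (hgood _ (by omega) (hmax _ (by omega) (by omega)))
      · intro x hx y hy
        rw [hM'last] at hx
        rw [head?_getD hBne s, hBget 0] at hy
        have hx' : x = v b' := (by simpa using hx : v b' = x).symm
        have hy' : y = f (i₁ + 2) := (by simpa using hy : f (i₁ + 2) = y).symm
        rw [hx', hy', ← hb', show i₁ + 2 = (i₁ + 1) + 1 from by omega]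
        exact Or.inl (hgood _ (by omega) (hmax _ (by omega) (by omega)))
    · intro x hx y hy
      rw [getLast?_getD hAne s, hlenA, hAget (i₀ - 1) (by omega)] at hx
      rw [List.head?_append, hM'hd] at hy
      have hx' : x = f (i₀ - 1) := (by simpa using hx : f (i₀ - 1) = x).symm
      have hy' : y = v a' := by
        simp only [Option.or] at hy
        exact (by simpa using hy : v a' = y).symm
      rw [hx', hy', ← ha', show i₀ = (i₀ - 1) + 1 from by omega]
      exact Or.inl (hgood _ (by omega) (hmin _ (by omega)))
  · -- head?
    rw [List.head?_append, head?_getD hAne s, hAget 0 (by omega), hf0]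
    rfl
  · -- getLast?
    rw [List.getLast?_append, List.getLast?_append, getLast?_getD hBne s, hBget _, hlenB,
      show i₁ + 2 + (n - (i₁ + 2) - 1) = n - 1 from by omega, hfl]
    rfl
  · -- parity
    simp only [pathLen] at hM'q ⊢
    rw [List.length_append, List.length_append, hlenA, hlenB]
    rw [hlenM] at hM'q
    omega

/-- Let `G = G₁ ⊕_c G₂` be a 3-clique-sum at `c = {v 0, v 1, v 2}`, with `s, t` in
`G₁` outside `c`.  Let `L'` be a graph glued to `G₁` at the same terminals, having the
same parity configuration as `G₂` with respect to `c`.  Then `G` has a simple `s → t`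
path of parity `p` iff `G₁ ⊕_c L'` has one. -/

theorem stmt_18 {V : Type*} (E₁ E₂ E' : V → V → Prop) (S₁ S₂ S' : Set V)
    (v : Fin 3 → V) (hv : Function.Injective v) (s t : V)
    (hS₁₂ : S₁ ∩ S₂ = {v 0, v 1, v 2}) (hS₁' : S₁ ∩ S' = {v 0, v 1, v 2})
    (hE₁ : ∀ u w, E₁ u w → u ∈ S₁ ∧ w ∈ S₁)
    (hE₂ : ∀ u w, E₂ u w → u ∈ S₂ ∧ w ∈ S₂)
    (hE' : ∀ u w, E' u w → u ∈ S' ∧ w ∈ S')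
    (hs : s ∈ S₁ ∧ s ∉ ({v 0, v 1, v 2} : Set V))
    (ht : t ∈ S₁ ∧ t ∉ ({v 0, v 1, v 2} : Set V))
    (hconfig : ∀ i j k : Fin 3, i ≠ j → j ≠ k → i ≠ k → ∀ q : ℕ,
      (HasDir E₂ (v i) (v j) (v k) q ↔ HasDir E' (v i) (v j) (v k) q) ∧
      (HasVia E₂ (v i) (v k) (v j) q ↔ HasVia E' (v i) (v k) (v j) q))
    (p : ℕ) :
    (∃ l : List V, IsDipathFrom (fun a b => E₁ a b ∨ E₂ a b) l s t ∧ pathLen l % 2 = p) ↔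
    (∃ l : List V, IsDipathFrom (fun a b => E₁ a b ∨ E' a b) l s t ∧ pathLen l % 2 = p) := by
  constructor
  · rintro ⟨l, hl, hp⟩
    obtain ⟨l', hl', hq⟩ := transfer_dir E₁ E₂ E' S₁ S₂ S' v hv s t hS₁₂ hS₁' hE₁ hE₂ hE' hs ht
      (fun i j k h1 h2 h3 q =>
        ⟨((hconfig i j k h1 h2 h3 q).1).mp, ((hconfig i j k h1 h2 h3 q).2).mp⟩) l hl
    exact ⟨l', hl', by rw [hq, hp]⟩
  · rintro ⟨l, hl, hp⟩
    obtain ⟨l', hl', hq⟩ := transfer_dir E₁ E' E₂ S₁ S' S₂ v hv s t hS₁' hS₁₂ hE₁ hE' hE₂ hs ht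
      (fun i j k h1 h2 h3 q =>
        ⟨((hconfig i j k h1 h2 h3 q).1).mpr, ((hconfig i j k h1 h2 h3 q).2).mpr⟩) l hl
    exact ⟨l', hl', by rw [hq, hp]⟩
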